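/- Let C be a finite set of size N ≥ 1, let Q be a finite set, let t ≥ 0 and s be integers with 2t ≤ s ≤ N, and let P be a function assigning to each q ∈ Q a subset P(q) ⊆ C with |P(q)| ≤ 2t. Then there exists a subset T ⊆ C with |T| = s such that the number of q ∈ Q with P(q) ⊆ T is at least ((s − 2t)/N)^{2t} · |Q|. -/

import Mathlib

open Finset

/-- Cast of descending factorial as a real product. -/
lemma descFactorial_cast_prod (n k : ℕ) (h : k ≤ n) :
    (n.descFactorial k : ℝ) = ∏ i ∈ range k, ((n : ℝ) - i) := by
  rw [Nat.descFactorial_eq_prod_range, Nat.cast_prod]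
  refine Finset.prod_congr rfl fun i hi => ?_
  have : i ≤ n := le_trans (le_of_lt (mem_range.mp hi)) h
  push_cast [Nat.cast_sub this]
  ring

/-- Key ratio bound. -/
lemma ratio_bound (N t s k : ℕ) (hN : 1 ≤ N) (hk : k ≤ 2 * t)
    (hts : 2 * t ≤ s) (hsN : s ≤ N) :
    (((s : ℝ) - 2 * t) / N) ^ (2 * t) * (N.descFactorial k) ≤ (s.descFactorial k) := by
  have hNpos : (0 : ℝ) < N := by exact_mod_cast hN
  have hbase0 : (0 : ℝ) ≤ ((s : ℝ) - 2 * t) / N := by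
    apply div_nonneg _ hNpos.le
    have : (2 * t : ℝ) ≤ s := by exact_mod_cast hts
    linarith
  have hbase1 : ((s : ℝ) - 2 * t) / N ≤ 1 := by
    rw [div_le_one hNpos]
    have : (s : ℝ) ≤ N := by exact_mod_cast hsN
    have : (0 : ℝ) ≤ 2 * (t : ℝ) := by positivity
    linarith
  have hkS : k ≤ s := le_trans hk hts
  have hkN : k ≤ N := le_trans hkS hsN
  rw [descFactorial_cast_prod N k hkN, descFactorial_cast_prod s k hkS]
  calc (((s : ℝ) - 2 * t) / N) ^ (2 * t) * ∏ i ∈ range k, ((N : ℝ) - i)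
      ≤ (((s : ℝ) - 2 * t) / N) ^ k * ∏ i ∈ range k, ((N : ℝ) - i) := by
        apply mul_le_mul_of_nonneg_right (pow_le_pow_of_le_one hbase0 hbase1 hk)
        apply Finset.prod_nonneg
        intro i hi
        have : i ≤ N := le_trans (le_of_lt (mem_range.mp hi)) hkN
        have : (i : ℝ) ≤ N := by exact_mod_cast this
        linarith
    _ = ∏ i ∈ range k, (((s : ℝ) - 2 * t) / N * ((N : ℝ) - i)) := by
        rw [Finset.prod_mul_distrib, Finset.prod_const, card_range]
    _ ≤ ∏ i ∈ range k, ((s : ℝ) - i) := by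
        apply Finset.prod_le_prod
        · intro i hi
          have hiN : (i : ℝ) ≤ N := by
            exact_mod_cast le_trans (le_of_lt (mem_range.mp hi)) hkN
          apply mul_nonneg hbase0
          linarith
        · intro i hi
          have hi2t : i < 2 * t := lt_of_lt_of_le (mem_range.mp hi) hk
          rw [div_mul_eq_mul_div, div_le_iff₀ hNpos]
          have h1 : (i : ℝ) < 2 * t := by exact_mod_cast hi2t
          have h2 : (2 * t : ℝ) ≤ s := by exact_mod_cast hts
          have h3 : (s : ℝ) ≤ N := by exact_mod_cast hsN
          nlinarith [mul_nonneg (sub_nonneg.mpr h2) (sub_nonneg.mpr h3)]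

/-- Number of `s`-subsets of a set of size `N` containing a fixed set `A` of size `k`. -/
lemma card_supersets {C : Type*} [Fintype C] [DecidableEq C] (A : Finset C) (s : ℕ)
    (hA : A.card ≤ s) :
    ((powersetCard s (univ : Finset C)).filter (fun T => A ⊆ T)).card
      = (Fintype.card C - A.card).choose (s - A.card) := by
  rw [← Finset.card_compl A, ← Finset.card_powersetCard]
  apply Finset.card_bij (fun T _ => T \ A)
  · intro T hT
    simp only [mem_filter, mem_powersetCard] at hT
    rw [mem_powersetCard]
    refine ⟨fun x hx => ?_, ?_⟩
    · simp only [mem_sdiff] at hx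
      simp [hx.2]
    · rw [card_sdiff_of_subset hT.2, hT.1.2]
  · intro T₁ hT₁ T₂ hT₂ h
    simp only [mem_filter, mem_powersetCard] at hT₁ hT₂
    rw [← Finset.sdiff_union_of_subset hT₁.2, ← Finset.sdiff_union_of_subset hT₂.2, h]
  · intro U hU
    rw [mem_powersetCard] at hU
    refine ⟨U ∪ A, ?_, ?_⟩
    · simp only [mem_filter, mem_powersetCard]
      have hdisj : Disjoint U A := by
        rw [Finset.disjoint_left]
        intro x hxU hxA
        have := hU.1 hxU
        simp [hxA] at this
      refine ⟨⟨subset_univ _, ?_⟩, subset_union_right⟩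
      rw [Finset.card_union_of_disjoint hdisj, hU.2]
      omega
    · rw [Finset.union_sdiff_right, Finset.sdiff_eq_self_iff_disjoint]
      rw [Finset.disjoint_left]
      intro x hxU hxA
      have := hU.1 hxU
      simp [hxA] at this

theorem cell_sampling {C Q : Type*} [Fintype C] [DecidableEq C] [Fintype Q]
    (hN : 1 ≤ Fintype.card C) (t s : ℕ)
    (hts : 2 * t ≤ s) (hsN : s ≤ Fintype.card C)
    (P : Q → Finset C) (hP : ∀ q : Q, (P q).card ≤ 2 * t) :
    ∃ T : Finset C, T.card = s ∧
      (((s : ℝ) - 2 * t) / (Fintype.card C : ℝ)) ^ (2 * t) * (Fintype.card Q : ℝ) ≤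
        ((Finset.univ.filter (fun q : Q => P q ⊆ T)).card : ℝ) := by
  classical
  set N := Fintype.card C with hNdef
  set c : ℝ := (((s : ℝ) - 2 * t) / N) ^ (2 * t) with hc
  set 𝒯 := powersetCard s (univ : Finset C) with h𝒯
  have h𝒯card : 𝒯.card = N.choose s := by
    rw [h𝒯, Finset.card_powersetCard, Finset.card_univ]
  have h𝒯ne : 𝒯.Nonempty := by
    rw [← Finset.card_pos, h𝒯card]
    exact Nat.choose_pos hsN
  -- key averaging inequality
  have hsum : ∑ T ∈ 𝒯, (c * Fintype.card Q : ℝ)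
      ≤ ∑ T ∈ 𝒯, ((Finset.univ.filter (fun q : Q => P q ⊆ T)).card : ℝ) := by
    have hswapN : ∑ T ∈ 𝒯, (Finset.univ.filter (fun q : Q => P q ⊆ T)).card
        = ∑ q : Q, (𝒯.filter (fun T => P q ⊆ T)).card := by
      simp only [Finset.card_filter]
      exact Finset.sum_comm
    have hswap : ∑ T ∈ 𝒯, ((Finset.univ.filter (fun q : Q => P q ⊆ T)).card : ℝ)
        = ∑ q : Q, ((𝒯.filter (fun T => P q ⊆ T)).card : ℝ) := by
      exact_mod_cast congrArg (Nat.cast : ℕ → ℝ) hswapN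
    rw [hswap, Finset.sum_const, h𝒯card, nsmul_eq_mul]
    have hL : (N.choose s : ℝ) * (c * (Fintype.card Q : ℝ))
        = ∑ _q : Q, c * (N.choose s : ℝ) := by
      rw [Finset.sum_const, Finset.card_univ, nsmul_eq_mul]; ring
    rw [hL]
    apply Finset.sum_le_sum
    intro q _
    have hk : (P q).card ≤ s := le_trans (hP q) hts
    rw [h𝒯, card_supersets (P q) s hk]
    -- now the binomial inequality
    have hid : (N - (P q).card).choose (s - (P q).card) * N.descFactorial (P q).card
        = N.choose s * s.descFactorial (P q).card := by
      have := Nat.choose_mul (n := N) hk  -- N.choose s * s.choose k = N.choose k * (N-k).choose (s-k)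
      rw [Nat.descFactorial_eq_factorial_mul_choose, Nat.descFactorial_eq_factorial_mul_choose]
      calc (N - (P q).card).choose (s - (P q).card) * (Nat.factorial (P q).card * N.choose (P q).card)
          = Nat.factorial (P q).card * (N.choose (P q).card * (N - (P q).card).choose (s - (P q).card)) := by
            ring
        _ = Nat.factorial (P q).card * (N.choose s * s.choose (P q).card) := by rw [← this]
        _ = N.choose s * (Nat.factorial (P q).card * s.choose (P q).card) := by ring
    have hdpos : (0 : ℝ) < (N.descFactorial (P q).card : ℝ) := by
      have h1 : 0 < N.descFactorial (P q).card := by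
        rw [Nat.descFactorial_eq_factorial_mul_choose]
        exact Nat.mul_pos (Nat.factorial_pos _) (Nat.choose_pos (le_trans hk hsN))
      exact_mod_cast h1
    rw [← mul_le_mul_iff_of_pos_right hdpos]
    calc c * (N.choose s : ℝ) * (N.descFactorial (P q).card : ℝ)
        = (N.choose s : ℝ) * (c * (N.descFactorial (P q).card : ℝ)) := by ring
      _ ≤ (N.choose s : ℝ) * (s.descFactorial (P q).card : ℝ) := by
          apply mul_le_mul_of_nonneg_left _ (by positivity)
          exact ratio_bound N t s (P q).card hN (hP q) hts hsN
      _ = ((N - (P q).card).choose (s - (P q).card) : ℝ) * (N.descFactorial (P q).card : ℝ) := by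
          rw [← Nat.cast_mul, ← Nat.cast_mul, hid]
  obtain ⟨T, hT, hle⟩ := Finset.exists_le_of_sum_le h𝒯ne hsum
  rw [h𝒯, mem_powersetCard] at hT
  exact ⟨T, hT.2, hle⟩
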